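/- arXiv:2208.08238 — 3 statements merged into one kernel-verified Lean document; each statement's English description precedes it below -/
import Mathlib

section
/- For all real numbers x and a with x ≥ a > 0, the inequality (x/(a+x))^(x²/a) ≤ 2/x holds. -/
theorem stmt_0 (x a : ℝ) (ha : 0 < a) (hax : a ≤ x) :
    (x / (a + x)) ^ (x ^ 2 / a) ≤ 2 / x := by
  have hx : 0 < x := lt_of_lt_of_le ha hax
  have hs : 0 < a + x := by linarith
  have hb : 0 < x / (a + x) := div_pos hx hs
  rw [Real.rpow_def_of_pos hb, mul_comm]
  have hlog : Real.log (x / (a + x)) ≤ -(a / (a + x)) := by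
    have h := Real.log_le_sub_one_of_pos hb
    have : x / (a + x) - 1 = -(a / (a + x)) := by field_simp; ring
    linarith
  have hexp : x ^ 2 / a * Real.log (x / (a + x)) ≤ -(x / 2) := by
    have h1 : x ^ 2 / a * Real.log (x / (a + x)) ≤ x ^ 2 / a * (-(a / (a + x))) := by
      apply mul_le_mul_of_nonneg_left hlog
      positivity
    have h2 : x ^ 2 / a * (-(a / (a + x))) = -(x ^ 2 / (a + x)) := by
      field_simp
    have h3 : x / 2 ≤ x ^ 2 / (a + x) := by
      rw [div_le_div_iff₀ (by norm_num) hs]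
      nlinarith
    linarith
  calc Real.exp (x ^ 2 / a * Real.log (x / (a + x)))
      ≤ Real.exp (-(x / 2)) := Real.exp_le_exp.mpr hexp
    _ ≤ 2 / x := by
        rw [le_div_iff₀ hx]
        have h := Real.add_one_le_exp (x / 2)
        have hpos := Real.exp_pos (x / 2)
        have : Real.exp (-(x / 2)) = (Real.exp (x / 2))⁻¹ := Real.exp_neg _
        rw [this]
        rw [inv_mul_le_iff₀ hpos]
        nlinarith
end

section
/- Let K ⊆ ℝᵈ be a nonempty closed convex set, H : ℝᵈ → ℝ differentiable and 1-strongly convex, G₁, G₂ ∈ ℝᵈ, z₀ ∈ K, and η, λ > 0. Define ẑᵢ = argmin_{z ∈ K} { ⟨Gᵢ, z⟩ + (1/λ)H(z) + (1/η)D(z|z₀) } for i = 1,2, where D is the Bregman divergence of H. Then ‖ẑ₁ − ẑ₂‖ ≤ (ηλ/(η+λ))·‖G₁ − G₂‖. -/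
open RealInnerProductSpace

/-- growth at a minimizer of a strongly convex function -/
lemma strong_min_growth {E : Type*} [NormedAddCommGroup E] [InnerProductSpace ℝ E]
    {s : Set E} {m : ℝ} {f : E → ℝ} (hf : StrongConvexOn s m f)
    {x : E} (hx : x ∈ s) (hmin : ∀ z ∈ s, f x ≤ f z) :
    ∀ z ∈ s, f x + m / 2 * ‖z - x‖ ^ 2 ≤ f z := by
  intro z hz
  have key : ∀ t ∈ Set.Ioo (0:ℝ) 1, f x + (1 - t) * (m / 2 * ‖z - x‖ ^ 2) ≤ f z := by
    intro t ht
    have h1 : (0:ℝ) ≤ t := ht.1.le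
    have h2 : (0:ℝ) ≤ 1 - t := by linarith [ht.2]
    have hcomb := hf.2 hz hx h1 h2 (by ring)
    have hmem : t • z + (1 - t) • x ∈ s := hf.1 hz hx h1 h2 (by ring)
    have hmin' := hmin _ hmem
    simp only [smul_eq_mul] at hcomb
    nlinarith [hcomb, hmin', ht.1]
  have hlim : Filter.Tendsto (fun t : ℝ => f x + (1 - t) * (m / 2 * ‖z - x‖ ^ 2))
      (nhdsWithin 0 (Set.Ioo 0 1)) (nhds (f x + m / 2 * ‖z - x‖ ^ 2)) := by
    have : Filter.Tendsto (fun t : ℝ => f x + (1 - t) * (m / 2 * ‖z - x‖ ^ 2))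
        (nhds 0) (nhds (f x + (1 - 0) * (m / 2 * ‖z - x‖ ^ 2))) := by
      apply Continuous.tendsto
      continuity
    simpa using this.mono_left nhdsWithin_le_nhds
  haveI : (nhdsWithin (0:ℝ) (Set.Ioo 0 1)).NeBot :=
    left_nhdsWithin_Ioo_neBot (by norm_num)
  refine le_of_tendsto hlim ?_
  filter_upwards [eventually_mem_nhdsWithin] with t ht using key t ht

lemma affine_convexOn {E : Type*} [NormedAddCommGroup E] [InnerProductSpace ℝ E]
    {s : Set E} (hs : Convex ℝ s) (v : E) (c : ℝ) :
    ConvexOn ℝ s (fun z => ⟪v, z⟫ + c) := by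
  refine ⟨hs, fun x hx y hy a b ha hb hab => le_of_eq ?_⟩
  simp only [inner_add_right, real_inner_smul_right, smul_eq_mul]
  linear_combination -c * hab

/-- Nonexpansiveness of the composite prox step: if `ẑᵢ` minimizes
`⟨Gᵢ, z⟩ + (1/λ)H(z) + (1/η)D(z|z₀)` over `K` (with `D` the Bregman divergence
of the 1-strongly convex `H`), then `‖zh1 - zh2‖ ≤ (ηλ/(η+λ))‖G₁ - G₂‖`. -/
theorem stmt_10 (d : ℕ) (K : Set (EuclideanSpace ℝ (Fin d)))
    (hKne : K.Nonempty) (hKc : IsClosed K) (hK : Convex ℝ K)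
    (H : EuclideanSpace ℝ (Fin d) → ℝ) (H' : EuclideanSpace ℝ (Fin d) → EuclideanSpace ℝ (Fin d))
    (hdiff : ∀ x, HasGradientAt H (H' x) x)
    (hstrong : ConvexOn ℝ K (fun z => H z - 1 / 2 * ‖z‖ ^ 2))
    (G₁ G₂ : EuclideanSpace ℝ (Fin d)) (z₀ : EuclideanSpace ℝ (Fin d)) (hz₀ : z₀ ∈ K)
    (η l : ℝ) (hη : 0 < η) (hl : 0 < l)
    (D : EuclideanSpace ℝ (Fin d) → EuclideanSpace ℝ (Fin d) → ℝ)
    (hD : ∀ z z', D z z' = H z - H z' - ⟪H' z', z - z'⟫)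
    (zh1 zh2 : EuclideanSpace ℝ (Fin d)) (hzh1K : zh1 ∈ K) (hzh2K : zh2 ∈ K)
    (hzh1 : ∀ z ∈ K, ⟪G₁, zh1⟫ + (1 / l) * H zh1 + (1 / η) * D zh1 z₀ ≤
                    ⟪G₁, z⟫ + (1 / l) * H z + (1 / η) * D z z₀)
    (hzh2 : ∀ z ∈ K, ⟪G₂, zh2⟫ + (1 / l) * H zh2 + (1 / η) * D zh2 z₀ ≤
                    ⟪G₂, z⟫ + (1 / l) * H z + (1 / η) * D z z₀) :
    ‖zh1 - zh2‖ ≤ (η * l / (η + l)) * ‖G₁ - G₂‖ := by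
  set m : ℝ := 1 / l + 1 / η with hm
  have hm0 : 0 < m := by positivity
  clear_value m
  -- strong convexity of the objectives
  have hsc : ∀ G : EuclideanSpace ℝ (Fin d),
      StrongConvexOn K m (fun z => ⟪G, z⟫ + (1 / l) * H z + (1 / η) * D z z₀) := by
    intro G
    rw [strongConvexOn_iff_convex]
    have h1 : ConvexOn ℝ K (fun z => m * (H z - 1 / 2 * ‖z‖ ^ 2)) := hstrong.smul hm0.le
    have h2 : ConvexOn ℝ K (fun z =>
        ⟪G - (1 / η) • (H' z₀), z⟫ + ((1 / η) * (⟪H' z₀, z₀⟫ - H z₀))) :=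
      affine_convexOn hK _ _
    have heq : (fun z => ⟪G, z⟫ + 1 / l * H z + 1 / η * D z z₀ - m / 2 * ‖z‖ ^ 2)
        = (fun z => m * (H z - 1 / 2 * ‖z‖ ^ 2)) + (fun z =>
          ⟪G - (1 / η) • (H' z₀), z⟫ + ((1 / η) * (⟪H' z₀, z₀⟫ - H z₀))) := by
      funext z
      simp only [Pi.add_apply, hD, inner_sub_left, inner_sub_right, real_inner_smul_left, hm]
      ring
    rw [heq]
    exact h1.add h2
  -- growth bounds at the minimizers
  have hg1 := strong_min_growth (hsc G₁) hzh1K hzh1 zh2 hzh2K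
  have hg2 := strong_min_growth (hsc G₂) hzh2K hzh2 zh1 hzh1K
  have hnorm : ‖zh2 - zh1‖ = ‖zh1 - zh2‖ := norm_sub_rev _ _
  rw [hnorm] at hg1
  have hkey : m * ‖zh1 - zh2‖ ^ 2 ≤ ⟪G₁ - G₂, zh2 - zh1⟫ := by
    have : ⟪G₁ - G₂, zh2 - zh1⟫ =
        (⟪G₁, zh2⟫ - ⟪G₁, zh1⟫) + (⟪G₂, zh1⟫ - ⟪G₂, zh2⟫) := by
      simp only [inner_sub_left, inner_sub_right]; ring
    rw [this]
    have hsum : m / 2 * ‖zh1 - zh2‖ ^ 2 + m / 2 * ‖zh1 - zh2‖ ^ 2 = m * ‖zh1 - zh2‖ ^ 2 := by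
      ring
    linarith [hg1, hg2, hsum]
  have hcs : ⟪G₁ - G₂, zh2 - zh1⟫ ≤ ‖G₁ - G₂‖ * ‖zh1 - zh2‖ := by
    calc ⟪G₁ - G₂, zh2 - zh1⟫ ≤ ‖G₁ - G₂‖ * ‖zh2 - zh1‖ := real_inner_le_norm _ _
    _ = ‖G₁ - G₂‖ * ‖zh1 - zh2‖ := by rw [hnorm]
  have hmain : m * ‖zh1 - zh2‖ ^ 2 ≤ ‖G₁ - G₂‖ * ‖zh1 - zh2‖ := hkey.trans hcs
  have hinv : η * l / (η + l) = 1 / m := by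
    field_simp [hm]
    rw [hm, mul_add, mul_one_div, mul_one_div, mul_div_assoc, div_self hl.ne', mul_comm η l,
      mul_div_assoc, div_self hη.ne']
    ring
  rw [hinv]
  rcases eq_or_lt_of_le (norm_nonneg (zh1 - zh2)) with h0 | h0
  · rw [← h0]
    positivity
  · have h3 : (m * ‖zh1 - zh2‖) * ‖zh1 - zh2‖ ≤ ‖G₁ - G₂‖ * ‖zh1 - zh2‖ := by
      have : (m * ‖zh1 - zh2‖) * ‖zh1 - zh2‖ = m * ‖zh1 - zh2‖ ^ 2 := by ring
      rw [this]; exact hmain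
    have h2 : m * ‖zh1 - zh2‖ ≤ ‖G₁ - G₂‖ := le_of_mul_le_mul_right h3 h0
    calc ‖zh1 - zh2‖ = 1 / m * (m * ‖zh1 - zh2‖) := by field_simp
    _ ≤ 1 / m * ‖G₁ - G₂‖ := by
        apply mul_le_mul_of_nonneg_left h2 (by positivity)
end

section
/- Let K ⊆ ℝᵈ be closed convex, H differentiable and convex, G ∈ ℝᵈ, λ, η > 0, z̃ ∈ K, and let ẑ = argmin_{z∈K}{ ⟨G, z⟩ + (1/λ)H(z) + (1/η)D(z|z̃) } where D is the Bregman divergence of H. Then for every z ∈ K: η⟨G, ẑ − z⟩ + (η/λ)(H(ẑ) − H(z)) ≤ D(z|z̃) − D(ẑ|z̃) − ((λ+η)/λ)·D(z|ẑ). -/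
open RealInnerProductSpace

/-- One-step composite mirror-descent inequality: if `zh` minimizes
`⟨G, z⟩ + (1/λ)H(z) + (1/η)D(z|zt)` over `K`, then for every `z ∈ K`,
`η⟨G, zh - z⟩ + (η/λ)(H(zh) - H(z)) ≤ D(z|zt) - D(zh|zt) - ((λ+η)/λ)D(z|zh)`. -/
theorem stmt_11 (d : ℕ) (K : Set (EuclideanSpace ℝ (Fin d)))
    (hKc : IsClosed K) (hK : Convex ℝ K)
    (H : EuclideanSpace ℝ (Fin d) → ℝ) (H' : EuclideanSpace ℝ (Fin d) → EuclideanSpace ℝ (Fin d))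
    (hdiff : ∀ x, HasGradientAt H (H' x) x)
    (hconv : ConvexOn ℝ K H)
    (G : EuclideanSpace ℝ (Fin d)) (zt : EuclideanSpace ℝ (Fin d)) (hzt : zt ∈ K)
    (l η : ℝ) (hl : 0 < l) (hη : 0 < η)
    (D : EuclideanSpace ℝ (Fin d) → EuclideanSpace ℝ (Fin d) → ℝ)
    (hD : ∀ z z', D z z' = H z - H z' - ⟪H' z', z - z'⟫)
    (zh : EuclideanSpace ℝ (Fin d)) (hzhK : zh ∈ K)
    (hzh : ∀ z ∈ K, ⟪G, zh⟫ + (1 / l) * H zh + (1 / η) * D zh zt ≤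
                   ⟪G, z⟫ + (1 / l) * H z + (1 / η) * D z zt) :
    ∀ z ∈ K, η * ⟪G, zh - z⟫ + (η / l) * (H zh - H z) ≤
      D z zt - D zh zt - ((l + η) / l) * D z zh := by
  intro z hz
  set v : EuclideanSpace ℝ (Fin d) := z - zh with hv
  -- the derivative of t ↦ H (zh + t • v) at 0
  have hline : HasDerivAt (fun t : ℝ => zh + t • v) v 0 := by
    simpa using ((hasDerivAt_id (0:ℝ)).smul_const v).const_add zh
  have hψ : HasDerivAt (fun t : ℝ => H (zh + t • v)) ⟪H' zh, v⟫ 0 := by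
    have hF : HasFDerivAt H ((InnerProductSpace.toDual ℝ (EuclideanSpace ℝ (Fin d))) (H' zh))
        (zh + (0:ℝ) • v) := by simpa using (hdiff zh).hasFDerivAt
    have := hF.comp_hasDerivAt 0 hline
    simpa [InnerProductSpace.toDual_apply_apply, Function.comp_def] using this
  -- key variational inequality
  have key : 0 ≤ ⟪G, v⟫ + (1 / l) * ⟪H' zh, v⟫ +
      (1 / η) * (⟪H' zh, v⟫ - ⟪H' zt, v⟫) := by
    set φ : ℝ → ℝ := fun t =>
      ⟪G, zh + t • v⟫ + (1 / l) * H (zh + t • v) + (1 / η) * D (zh + t • v) zt with hφdef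
    have hmem : ∀ t ∈ Set.Icc (0:ℝ) 1, zh + t • v ∈ K := by
      intro t ht
      have h1 : (1 - t) • zh + t • z ∈ K :=
        hK hzhK hz (by linarith [ht.2]) ht.1 (by ring)
      have : zh + t • v = (1 - t) • zh + t • z := by
        simp only [hv]
        module
      rw [this]; exact h1
    have hmin : ∀ t ∈ Set.Icc (0:ℝ) 1, φ 0 ≤ φ t := by
      intro t ht
      have := hzh _ (hmem t ht)
      simpa [hφdef, zero_smul] using this
    -- derivative of φ at 0
    have hφderiv : HasDerivAt φ
        (⟪G, v⟫ + (1 / l) * ⟪H' zh, v⟫ + (1 / η) * (⟪H' zh, v⟫ - ⟪H' zt, v⟫)) 0 := by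
      have hg : HasDerivAt (fun t : ℝ => ⟪G, zh + t • v⟫) ⟪G, v⟫ 0 := by
        have : (fun t : ℝ => ⟪G, zh + t • v⟫) = fun t : ℝ => ⟪G, zh⟫ + t * ⟪G, v⟫ := by
          funext t; simp [inner_add_right, inner_smul_right]
        rw [this]
        simpa using ((hasDerivAt_id (0:ℝ)).mul_const ⟪G, v⟫).const_add ⟪G, zh⟫
      have hd : HasDerivAt (fun t : ℝ => D (zh + t • v) zt)
          (⟪H' zh, v⟫ - ⟪H' zt, v⟫) 0 := by
        have heq : (fun t : ℝ => D (zh + t • v) zt) =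
            fun t : ℝ => H (zh + t • v) - H zt - (⟪H' zt, zh - zt⟫ + t * ⟪H' zt, v⟫) := by
          funext t
          rw [hD]
          have : zh + t • v - zt = (zh - zt) + t • v := by module
          rw [this, inner_add_right, inner_smul_right]
        rw [heq]
        have h2 : HasDerivAt (fun t : ℝ => ⟪H' zt, zh - zt⟫ + t * ⟪H' zt, v⟫) ⟪H' zt, v⟫ 0 := by
          simpa using ((hasDerivAt_id (0:ℝ)).mul_const ⟪H' zt, v⟫).const_add ⟪H' zt, zh - zt⟫
        exact (hψ.sub_const (H zt)).sub h2
      exact (hg.add (hψ.const_mul (1/l))).add (hd.const_mul (1/η))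
    -- slope argument
    have hslope : Filter.Tendsto (slope φ 0) (nhdsWithin 0 (Set.Ioi 0))
        (nhds (⟪G, v⟫ + (1 / l) * ⟪H' zh, v⟫ + (1 / η) * (⟪H' zh, v⟫ - ⟪H' zt, v⟫))) :=
      (hasDerivAt_iff_tendsto_slope.mp hφderiv).mono_left
        (nhdsWithin_mono 0 (fun x hx => ne_of_gt hx))
    refine ge_of_tendsto hslope ?_
    have hIoc : Set.Ioc (0:ℝ) 1 ∈ nhdsWithin 0 (Set.Ioi 0) :=
      Ioc_mem_nhdsGT_of_mem ⟨le_refl 0, zero_lt_one⟩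
    filter_upwards [hIoc] with t ht
    have ht0 : (0:ℝ) < t := ht.1
    have hmono := hmin t ⟨le_of_lt ht0, ht.2⟩
    have h := div_nonneg (sub_nonneg.mpr hmono) ht0.le
    simpa [slope_def_field, sub_zero] using h
  -- algebra to conclude
  have hDz := hD z zt
  have hDzh := hD zh zt
  have hDzzh := hD z zh
  have e1 : ⟪H' zt, z - zt⟫ - ⟪H' zt, zh - zt⟫ = ⟪H' zt, v⟫ := by
    rw [← inner_sub_right]
    congr 1
    simp only [hv]
    module
  have e2 : ⟪H' zh, z - zh⟫ = ⟪H' zh, v⟫ := by rw [hv]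
  have e3 : ⟪G, zh - z⟫ = -⟪G, v⟫ := by
    rw [← inner_neg_right]
    congr 1
    simp only [hv]
    module
  rw [hDz, hDzh, hDzzh, e2, e3]
  have hl' : l ≠ 0 := ne_of_gt hl
  have hη' : η ≠ 0 := ne_of_gt hη
  have key' : 0 ≤ η * (⟪G, v⟫ + (1 / l) * ⟪H' zh, v⟫ +
      (1 / η) * (⟪H' zh, v⟫ - ⟪H' zt, v⟫)) := mul_nonneg (le_of_lt hη) key
  have hexp : η * (1 / η) = 1 := mul_one_div_cancel hη'
  have hexp2 : (l + η) / l = 1 + η / l := by field_simp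
  have hη1 : η * (1/l) = η / l := by ring
  -- rewrite key'
  have key2 : 0 ≤ η * ⟪G, v⟫ + (η / l) * ⟪H' zh, v⟫ + (⟪H' zh, v⟫ - ⟪H' zt, v⟫) := by
    have : η * (⟪G, v⟫ + (1 / l) * ⟪H' zh, v⟫ + (1 / η) * (⟪H' zh, v⟫ - ⟪H' zt, v⟫))
        = η * ⟪G, v⟫ + (η / l) * ⟪H' zh, v⟫ + (⟪H' zh, v⟫ - ⟪H' zt, v⟫) := by
      field_simp
    linarith [key'.trans_eq this]
  have e1' : ⟪H' zt, z - zt⟫ = ⟪H' zt, zh - zt⟫ + ⟪H' zt, v⟫ := by linarith [e1]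
  rw [e1', hexp2]
  nlinarith [key2]
end
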